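/- There exists a natural number k₀ ≥ 1 such that the following holds. For each integer k set α(k) = 1/√(k+3) and M(k) = ⌈2π√(k+3)⌉. Let P ⊆ ℂ be a set of points such that for every integer k ≥ k₀ and every integer i with 0 ≤ i < M(k) there exists p ∈ P with k + 3/2 ≤ |p| ≤ k + 2 and with argument lying (mod 2π) in (α(k)·i, α(k)·(i+1)]. Define G : ℕ → Set ℂ by G(k₀) = closed disk of radius k₀+1 centered at 0, and G(k+1) = convexHull ℝ ( G(k) ∪ ⋃ { closed unit disk centered at p : p ∈ P, the closed unit disk centered at p meets G(k) } ). Then for every k ≥ k₀ the closed disk of radius k+1 centered at 0 is contained in G(k); in particular ⋃_{k ≥ k₀} G(k) = ℂ. -/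

import Mathlib

private lemma pow2_le_of (a b : ℝ) (hb : 0 ≤ b) (h : a^2 ≤ b^2) : a ≤ b := by
  nlinarith

private lemma keylem (t x y : ℝ) (ht : 2 ≤ t) (hx : 0 < x) (hy : 0 < y)
    (hxy : x*y*t^2 ≤ (t^2-1)^2) : 2*t*(x*y) ≤ (t^2-1)*(x+y) := by
  have htm : (0:ℝ) ≤ t^2 - 1 := by nlinarith [sq_nonneg (t-2)]
  apply pow2_le_of _ _ (mul_nonneg htm (by positivity))
  have h4 : 4*(x*y) ≤ (x+y)^2 := by nlinarith [sq_nonneg (x-y)]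
  calc (2*t*(x*y))^2 = 4 * (x*y*t^2) * (x*y) := by ring
    _ ≤ 4 * ((t^2-1)^2) * (x*y) := by
        nlinarith [mul_le_mul_of_nonneg_right hxy (le_of_lt (mul_pos hx hy))]
    _ = (t^2-1)^2 * (4*(x*y)) := by ring
    _ ≤ (t^2-1)^2 * (x+y)^2 := mul_le_mul_of_nonneg_left h4 (by positivity)
    _ = ((t^2-1)*(x+y))^2 := by ring

set_option maxHeartbeats 1000000 in
private lemma core_main (K t r₁ r₂ δ₁ δ₂ s₁ s₂ c₁ c₂ : ℝ)
    (hK : 1 ≤ K) (ht2 : t^2 = K+3) (ht : 2 ≤ t)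
    (h1l : K + 3/2 ≤ r₁) (h1u : r₁ ≤ K+2)
    (h2l : K + 3/2 ≤ r₂) (h2u : r₂ ≤ K+2)
    (hd1 : 0 < δ₁) (hd2 : 0 < δ₂) (hsum : t*(δ₁+δ₂) ≤ 2)
    (hs1a : s₁ ≤ δ₁) (hs1b : δ₁ - δ₁^3/4 ≤ s₁) (hs1p : 0 < s₁)
    (hs2a : s₂ ≤ δ₂) (hs2b : δ₂ - δ₂^3/4 ≤ s₂) (hs2p : 0 < s₂)
    (hc1 : 1 - δ₁^2/2 ≤ c₁) (hc2 : 1 - δ₂^2/2 ≤ c₂) :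
    (K+1) * (r₁*s₁ + r₂*s₂) ≤ (r₂*s₂)*(r₁*c₁) + (r₁*s₁)*(r₂*c₂) := by
  have ht0 : (0:ℝ) < t := by linarith
  have hr1p : (0:ℝ) < r₁ := by linarith
  have hr2p : (0:ℝ) < r₂ := by linarith
  have htd1 : t*δ₁ ≤ 2 := by nlinarith
  have htd2 : t*δ₂ ≤ 2 := by nlinarith
  have htd1n : (0:ℝ) ≤ t*δ₁ := mul_nonneg (le_of_lt ht0) (le_of_lt hd1)
  have htd2n : (0:ℝ) ≤ t*δ₂ := mul_nonneg (le_of_lt ht0) (le_of_lt hd2)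
  have htsq1 : t^2*δ₁^2 ≤ 4 := by nlinarith [mul_le_mul htd1 htd1 htd1n (by norm_num : (0:ℝ) ≤ 2)]
  have htsq2 : t^2*δ₂^2 ≤ 4 := by nlinarith [mul_le_mul htd2 htd2 htd2n (by norm_num : (0:ℝ) ≤ 2)]
  have hdd : t^2*(δ₁*δ₂) ≤ 1 := by
    nlinarith [sq_nonneg (t*δ₁ - t*δ₂),
      mul_le_mul hsum hsum (by positivity) (by norm_num : (0:ℝ) ≤ 2)]
  have hrr : r₁*r₂ ≤ (t^2-1)^2 := by nlinarith
  have hxy : (r₁*δ₁)*(r₂*δ₂)*t^2 ≤ (t^2-1)^2 := by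
    have h1 : (r₁*r₂) * (t^2*(δ₁*δ₂)) ≤ (t^2-1)^2 * 1 :=
      mul_le_mul hrr hdd (by positivity) (by positivity)
    nlinarith [h1]
  have hkey : 2*t*((r₁*δ₁)*(r₂*δ₂)) ≤ (t^2-1)*(r₁*δ₁+r₂*δ₂) :=
    keylem t _ _ ht (by positivity) (by positivity) hxy
  have hK3b : (t^2-1)*(r₁*δ₁+r₂*δ₂) ≤ t^2*(r₁*s₁+r₂*s₂) := by
    have e1 : (t^2-1)*(r₁*δ₁) ≤ t^2*(r₁*s₁) := by
      nlinarith [mul_le_mul_of_nonneg_left hs1b (by positivity : (0:ℝ) ≤ t^2*r₁),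
        mul_le_mul_of_nonneg_left htsq1 (by positivity : (0:ℝ) ≤ r₁*δ₁)]
    have e2 : (t^2-1)*(r₂*δ₂) ≤ t^2*(r₂*s₂) := by
      nlinarith [mul_le_mul_of_nonneg_left hs2b (by positivity : (0:ℝ) ≤ t^2*r₂),
        mul_le_mul_of_nonneg_left htsq2 (by positivity : (0:ℝ) ≤ r₂*δ₂)]
    linarith
  have hN : (r₂*s₂)*(r₁*δ₁^2) + (r₁*s₁)*(r₂*δ₂^2) ≤ (r₁*δ₁)*(r₂*δ₂)*(δ₁+δ₂) := by
    nlinarith [mul_le_mul_of_nonneg_right hs2a (by positivity : (0:ℝ) ≤ r₂*(r₁*δ₁^2)),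
      mul_le_mul_of_nonneg_right hs1a (by positivity : (0:ℝ) ≤ r₁*(r₂*δ₂^2))]
  have h2 : t^2*((r₁*δ₁)*(r₂*δ₂)*(δ₁+δ₂)) ≤ 2*t*((r₁*δ₁)*(r₂*δ₂)) := by
    nlinarith [mul_le_mul_of_nonneg_left hsum
      (by positivity : (0:ℝ) ≤ t*((r₁*δ₁)*(r₂*δ₂)))]
  have hK3 : (r₂*s₂)*(r₁*δ₁^2) + (r₁*s₁)*(r₂*δ₂^2) ≤ r₁*s₁ + r₂*s₂ := by
    have ht2p : (0:ℝ) < t^2 := by positivity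
    have chain : t^2 * ((r₂*s₂)*(r₁*δ₁^2) + (r₁*s₁)*(r₂*δ₂^2)) ≤ t^2 * (r₁*s₁ + r₂*s₂) := by
      calc t^2 * ((r₂*s₂)*(r₁*δ₁^2) + (r₁*s₁)*(r₂*δ₂^2))
          ≤ t^2*((r₁*δ₁)*(r₂*δ₂)*(δ₁+δ₂)) := by nlinarith
        _ ≤ 2*t*((r₁*δ₁)*(r₂*δ₂)) := h2
        _ ≤ (t^2-1)*(r₁*δ₁+r₂*δ₂) := hkey
        _ ≤ t^2*(r₁*s₁+r₂*s₂) := hK3b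
    exact le_of_mul_le_mul_left chain ht2p
  have c1 : (r₂*s₂)*r₁ - (r₂*s₂)*(r₁*δ₁^2)/2 ≤ (r₂*s₂)*(r₁*c₁) := by
    nlinarith [mul_le_mul_of_nonneg_left hc1 (by positivity : (0:ℝ) ≤ (r₂*s₂)*r₁)]
  have c2 : (r₁*s₁)*r₂ - (r₁*s₁)*(r₂*δ₂^2)/2 ≤ (r₁*s₁)*(r₂*c₂) := by
    nlinarith [mul_le_mul_of_nonneg_left hc2 (by positivity : (0:ℝ) ≤ (r₁*s₁)*r₂)]
  have c3 : (K+3/2)*(r₁*s₁+r₂*s₂) ≤ (r₂*s₂)*r₁ + (r₁*s₁)*r₂ := by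
    nlinarith [mul_le_mul_of_nonneg_left h1l (by positivity : (0:ℝ) ≤ r₂*s₂),
      mul_le_mul_of_nonneg_left h2l (by positivity : (0:ℝ) ≤ r₁*s₁)]
  linarith

set_option maxHeartbeats 1000000 in
lemma core (k : ℕ) (hk : 1 ≤ k) (r₁ r₂ δ₁ δ₂ : ℝ)
    (h1l : (k:ℝ) + 3/2 ≤ r₁) (h1u : r₁ ≤ (k:ℝ)+2)
    (h2l : (k:ℝ) + 3/2 ≤ r₂) (h2u : r₂ ≤ (k:ℝ)+2)
    (hd1 : 0 ≤ δ₁) (hd2 : 0 ≤ δ₂) (hsum : δ₁ + δ₂ ≤ 2 / Real.sqrt ((k:ℝ)+3)) :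
    ∃ lam mv : ℝ, 0 ≤ lam ∧ lam ≤ 1 ∧ (k:ℝ)+1 ≤ mv ∧
      lam * (r₁ * Real.cos δ₁) + (1-lam) * (r₂ * Real.cos δ₂) = mv ∧
      lam * (r₁ * Real.sin δ₁) = (1-lam) * (r₂ * Real.sin δ₂) := by
  have ht2 : (Real.sqrt ((k:ℝ)+3))^2 = (k:ℝ)+3 := Real.sq_sqrt (by positivity)
  have hk1 : (1:ℝ) ≤ (k:ℝ) := by exact_mod_cast hk
  have ht : 2 ≤ Real.sqrt ((k:ℝ)+3) := by
    nlinarith [Real.sqrt_nonneg ((k:ℝ)+3)]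
  have ht0 : 0 < Real.sqrt ((k:ℝ)+3) := by linarith
  have hsum' : Real.sqrt ((k:ℝ)+3) * (δ₁ + δ₂) ≤ 2 := by
    rw [div_eq_mul_inv] at hsum
    calc Real.sqrt ((k:ℝ)+3) * (δ₁+δ₂) ≤ Real.sqrt ((k:ℝ)+3) * (2 * (Real.sqrt ((k:ℝ)+3))⁻¹) :=
          mul_le_mul_of_nonneg_left hsum (le_of_lt ht0)
      _ = 2 := by field_simp
  have hd1u : δ₁ ≤ 1 := by nlinarith
  have hd2u : δ₂ ≤ 1 := by nlinarith
  by_cases hz1 : δ₁ = 0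
  · exact ⟨1, r₁, by norm_num, by norm_num, by linarith, by simp [hz1], by simp [hz1]⟩
  by_cases hz2 : δ₂ = 0
  · exact ⟨0, r₂, by norm_num, by norm_num, by linarith, by simp [hz2], by simp [hz2]⟩
  have hd1p : 0 < δ₁ := lt_of_le_of_ne hd1 (Ne.symm hz1)
  have hd2p : 0 < δ₂ := lt_of_le_of_ne hd2 (Ne.symm hz2)
  have hs1p : 0 < Real.sin δ₁ :=
    Real.sin_pos_of_pos_of_lt_pi hd1p (by nlinarith [Real.pi_gt_three])
  have hs2p : 0 < Real.sin δ₂ :=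
    Real.sin_pos_of_pos_of_lt_pi hd2p (by nlinarith [Real.pi_gt_three])
  have hr1p : (0:ℝ) < r₁ := by linarith
  have hr2p : (0:ℝ) < r₂ := by linarith
  have hAp : 0 < r₁ * Real.sin δ₁ := mul_pos hr1p hs1p
  have hBp : 0 < r₂ * Real.sin δ₂ := mul_pos hr2p hs2p
  have hSp : 0 < r₁ * Real.sin δ₁ + r₂ * Real.sin δ₂ := by linarith
  have hSne : r₁ * Real.sin δ₁ + r₂ * Real.sin δ₂ ≠ 0 := ne_of_gt hSp
  set A := r₁ * Real.sin δ₁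
  set B := r₂ * Real.sin δ₂
  have hmain : ((k:ℝ)+1) * (A + B) ≤ B*(r₁*Real.cos δ₁) + A*(r₂*Real.cos δ₂) :=
    core_main (k:ℝ) (Real.sqrt ((k:ℝ)+3)) r₁ r₂ δ₁ δ₂ _ _ _ _
      hk1 ht2 ht h1l h1u h2l h2u hd1p hd2p hsum'
      (Real.sin_le hd1) (by have := Real.sin_gt_sub_cube hd1p; nlinarith [pow_pos hd1p 3]) hs1p
      (Real.sin_le hd2) (by have := Real.sin_gt_sub_cube hd2p; nlinarith [pow_pos hd2p 3]) hs2p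
      Real.one_sub_sq_div_two_le_cos Real.one_sub_sq_div_two_le_cos
  refine ⟨B/(A+B), (B/(A+B)) * (r₁ * Real.cos δ₁) + (1-B/(A+B)) * (r₂ * Real.cos δ₂),
    by positivity, by rw [div_le_one hSp]; linarith, ?_, rfl, ?_⟩
  · have h1 : (1:ℝ) - B/(A+B) = A/(A+B) := by field_simp; ring
    rw [h1, div_mul_eq_mul_div, div_mul_eq_mul_div, ← add_div, le_div_iff₀ hSp]
    linarith
  · have h1 : (1:ℝ) - B/(A+B) = A/(A+B) := by field_simp; ring
    rw [h1, div_mul_eq_mul_div, div_mul_eq_mul_div, mul_comm A B]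


private lemma combo (r₁ r₂ δ₁ δ₂ θ lam mv : ℝ)
    (h1 : lam * (r₁ * Real.cos δ₁) + (1-lam) * (r₂ * Real.cos δ₂) = mv)
    (h2 : lam * (r₁ * Real.sin δ₁) = (1-lam) * (r₂ * Real.sin δ₂)) :
    lam • ((r₁:ℂ) * Complex.exp ((θ - δ₁ : ℝ) * Complex.I))
      + (1-lam) • ((r₂:ℂ) * Complex.exp ((θ + δ₂ : ℝ) * Complex.I))
      = (mv:ℂ) * Complex.exp ((θ:ℝ) * Complex.I) := by
  have ea : Complex.exp (((θ:ℂ) - (δ₁:ℂ)) * Complex.I)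
      = Complex.exp ((θ:ℂ) * Complex.I) * (Complex.cos δ₁ - Complex.sin δ₁ * Complex.I) := by
    rw [sub_mul, sub_eq_add_neg, Complex.exp_add, ← neg_mul]
    congr 1
    rw [Complex.exp_mul_I, Complex.cos_neg, Complex.sin_neg]
    ring
  have eb : Complex.exp (((θ:ℂ) + (δ₂:ℂ)) * Complex.I)
      = Complex.exp ((θ:ℂ) * Complex.I) * (Complex.cos δ₂ + Complex.sin δ₂ * Complex.I) := by
    rw [add_mul, Complex.exp_add]
    congr 1
    exact Complex.exp_mul_I _
  have H1 : (lam:ℂ) * (r₁ * Complex.cos δ₁) + (1-(lam:ℂ)) * (r₂ * Complex.cos δ₂) = mv := by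
    have := congrArg (Complex.ofReal) h1
    push_cast [Complex.ofReal_cos] at this
    exact_mod_cast this
  have H2 : (lam:ℂ) * (r₁ * Complex.sin δ₁) = (1-(lam:ℂ)) * (r₂ * Complex.sin δ₂) := by
    have := congrArg (Complex.ofReal) h2
    push_cast [Complex.ofReal_sin] at this
    exact_mod_cast this
  push_cast
  rw [ea, eb]
  simp only [Complex.real_smul]
  push_cast
  linear_combination Complex.exp ((θ:ℂ) * Complex.I) * H1
    - Complex.exp ((θ:ℂ) * Complex.I) * Complex.I * H2

set_option maxHeartbeats 1000000 in
/-- Deterministic content of Proposition 3.7: there is a starting scale `k₀ ≥ 1` such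
that if, for every `k ≥ k₀`, each of the `M(k) = ⌈2π√(k+3)⌉` angular sectors of width
`α(k) = 1/√(k+3)` of the ring `{k + 3/2 ≤ |z| ≤ k + 2}` contains a point of `P`, then
the iterated convex-hull process `G` starting from the closed disk of radius `k₀ + 1`
and adjoining at each step all unit disks centered at points of `P` that meet the
current set satisfies `closedBall 0 (k+1) ⊆ G k` for every `k ≥ k₀`; in particular
the sets `G k`, `k ≥ k₀`, cover the whole plane. -/
theorem growth_covers_plane :
    ∃ k₀ : ℕ, 1 ≤ k₀ ∧ ∀ P : Set ℂ,
      (∀ k : ℕ, k₀ ≤ k → ∀ i : ℤ, 0 ≤ i → i < ⌈2 * Real.pi * Real.sqrt ((k : ℝ) + 3)⌉ →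
        ∃ p ∈ P, (k : ℝ) + 3 / 2 ≤ ‖p‖ ∧ ‖p‖ ≤ (k : ℝ) + 2 ∧
          ∃ θ ∈ Set.Ioc ((1 / Real.sqrt ((k : ℝ) + 3)) * (i : ℝ))
              ((1 / Real.sqrt ((k : ℝ) + 3)) * ((i : ℝ) + 1)),
            p = (‖p‖ : ℂ) * Complex.exp (θ * Complex.I)) →
      ∀ G : ℕ → Set ℂ,
        G k₀ = Metric.closedBall (0 : ℂ) ((k₀ : ℝ) + 1) →
        (∀ k : ℕ, k₀ ≤ k → G (k + 1) = convexHull ℝ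
          (G k ∪ ⋃ p ∈ {p ∈ P | (Metric.closedBall p 1 ∩ G k).Nonempty},
            Metric.closedBall p 1)) →
        (∀ k : ℕ, k₀ ≤ k → Metric.closedBall (0 : ℂ) ((k : ℝ) + 1) ⊆ G k) ∧
          ⋃ k ∈ {k : ℕ | k₀ ≤ k}, G k = Set.univ := by
  refine ⟨1, le_rfl, ?_⟩
  intro P hP G hG0 hGrec
  have hstep : ∀ k : ℕ, 1 ≤ k → Metric.closedBall (0:ℂ) ((k:ℝ)+1) ⊆ G k →
      Metric.closedBall (0:ℂ) (((k+1:ℕ):ℝ)+1) ⊆ G (k+1) := by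
    intro k hk ih
    rw [hGrec k hk]
    set S := G k ∪ ⋃ p ∈ {p ∈ P | (Metric.closedBall p 1 ∩ G k).Nonempty},
        Metric.closedBall p 1 with hSdef
    have hk1 : (1:ℝ) ≤ (k:ℝ) := by exact_mod_cast hk
    have hGS : G k ⊆ convexHull ℝ S :=
      subset_trans Set.subset_union_left (subset_convexHull ℝ S)
    -- unit balls around ring points are in S
    have hballS : ∀ p : ℂ, p ∈ P → (k:ℝ)+3/2 ≤ ‖p‖ →
        ‖p‖ ≤ (k:ℝ)+2 → Metric.closedBall p 1 ⊆ S := by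
      intro p hpP h1 h2
      have hap : (0:ℝ) < ‖p‖ := by linarith
      have hinv : ‖p‖⁻¹ ≤ 1 := by
        rw [inv_le_one_iff₀]; right; linarith
      have habsw : ‖(1 - ‖p‖⁻¹) • p‖ = ‖p‖ - 1 := by
        rw [Complex.real_smul, norm_mul, Complex.norm_real, Real.norm_eq_abs,
          abs_of_nonneg (by linarith : (0:ℝ) ≤ 1 - ‖p‖⁻¹)]
        field_simp
      have hwG : (1 - ‖p‖⁻¹) • p ∈ G k := by
        apply ih
        simp only [Metric.mem_closedBall, Complex.dist_eq, sub_zero]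
        rw [habsw]; linarith
      have hwB : (1 - ‖p‖⁻¹) • p ∈ Metric.closedBall p 1 := by
        simp only [Metric.mem_closedBall, Complex.dist_eq]
        have hrw : (1 - ‖p‖⁻¹) • p - p = -(((‖p‖⁻¹ : ℝ) : ℂ) * p) := by
          rw [Complex.real_smul]; push_cast; ring
        rw [hrw, norm_neg, norm_mul, Complex.norm_real, Real.norm_eq_abs,
          abs_of_nonneg (by positivity : (0:ℝ) ≤ ‖p‖⁻¹)]
        rw [inv_mul_cancel₀ (ne_of_gt hap)]
      intro w hw'
      refine Set.mem_union_right _ (Set.mem_biUnion ?_ hw')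
      exact ⟨hpP, ⟨_, Set.mem_inter hwB hwG⟩⟩
    intro z hz
    have hz2 : ‖z‖ ≤ (k:ℝ)+2 := by
      have := Metric.mem_closedBall.mp hz
      rw [Complex.dist_eq, sub_zero] at this
      push_cast at this
      linarith
    by_cases hz1 : ‖z‖ ≤ (k:ℝ)+1
    · exact hGS (ih (by simpa [Complex.dist_eq, sub_zero] using hz1))
    push_neg at hz1
    -- setup
    have ht2 : (Real.sqrt ((k:ℝ)+3))^2 = (k:ℝ)+3 := Real.sq_sqrt (by positivity)
    have ht : 2 ≤ Real.sqrt ((k:ℝ)+3) := by nlinarith [Real.sqrt_nonneg ((k:ℝ)+3)]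
    have ht0 : 0 < Real.sqrt ((k:ℝ)+3) := by linarith
    set t := Real.sqrt ((k:ℝ)+3) with htdef
    have hπ : (0:ℝ) < 2*Real.pi := Real.two_pi_pos
    have hMZpos : 0 < ⌈2 * Real.pi * t⌉ := Int.ceil_pos.mpr (by positivity)
    set M : ℕ := (⌈2 * Real.pi * t⌉).toNat with hMdef
    have hM0 : 0 < M := by
      rw [hMdef]
      omega
    have hMc : 2*Real.pi*t ≤ (M:ℝ) := by
      have h1 := Int.le_ceil (2*Real.pi*t)
      have h2 : ((M:ℤ):ℝ) = (M:ℝ) := by push_cast; ring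
      rw [hMdef] at *
      rw [← h2]
      rw [Int.toNat_of_nonneg (le_of_lt hMZpos)]
      exact h1
    -- selection of sector points
    have hsel : ∀ j : ℕ, ∃ w : ℂ × ℝ, j < M →
        w.1 ∈ P ∧ (k:ℝ)+3/2 ≤ ‖w.1‖ ∧ ‖w.1‖ ≤ (k:ℝ)+2 ∧
        (1/t)*(j:ℝ) < w.2 ∧ w.2 ≤ (1/t)*((j:ℝ)+1) ∧
        w.1 = (‖w.1‖ : ℂ) * Complex.exp ((w.2:ℂ) * Complex.I) := by
      intro j
      by_cases h : j < M
      · have hj : (j:ℤ) < ⌈2 * Real.pi * t⌉ := by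
          rw [hMdef] at h
          exact Int.lt_toNat.mp h
        obtain ⟨p, hp, ha, hb, θp, hθp, he⟩ := hP k hk j (Int.ofNat_nonneg j) hj
        refine ⟨(p, θp), fun _ => ⟨hp, ha, hb, ?_, ?_, he⟩⟩
        · have := hθp.1; push_cast at this ⊢; linarith
        · have := hθp.2; push_cast at this ⊢; linarith
      · exact ⟨(0,0), fun h' => absurd h' h⟩
    choose pt hpt using hsel
    -- angle representative
    set n : ℤ := ⌊((pt 0).2 - Complex.arg z)/(2*Real.pi)⌋ + 1 with hndef
    set θ'' : ℝ := Complex.arg z + 2*Real.pi*(n:ℝ) with hθdef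
    have hθl : (pt 0).2 < θ'' := by
      have h1 : ((pt 0).2 - Complex.arg z)/(2*Real.pi) < (n:ℝ) := by
        rw [hndef]; push_cast; exact Int.lt_floor_add_one _
      rw [div_lt_iff₀ hπ] at h1
      rw [hθdef]; linarith
    have hθu : θ'' ≤ (pt 0).2 + 2*Real.pi := by
      have h1 : ((n:ℝ) - 1) ≤ ((pt 0).2 - Complex.arg z)/(2*Real.pi) := by
        rw [hndef]; push_cast; simp [Int.floor_le]
      rw [le_div_iff₀ hπ] at h1
      rw [hθdef]; nlinarith
    have hexp : Complex.exp ((θ'':ℂ) * Complex.I)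
        = Complex.exp ((Complex.arg z : ℂ) * Complex.I) := by
      rw [hθdef]
      push_cast
      rw [add_mul, Complex.exp_add]
      have : ((2:ℂ)*Real.pi*(n:ℂ)) * Complex.I = (n:ℂ) * (2*Real.pi*Complex.I) := by ring
      rw [this, Complex.exp_int_mul_two_pi_mul_I, mul_one]
    have hzeq : z = (‖z‖ : ℂ) * Complex.exp ((θ'':ℂ) * Complex.I) := by
      rw [hexp, Complex.norm_mul_exp_arg_mul_I]
    -- maximal sector below θ''
    set Fs : Finset ℕ := (Finset.range M).filter (fun j => (pt j).2 ≤ θ'') with hFsdef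
    have hFne : Fs.Nonempty :=
      ⟨0, Finset.mem_filter.mpr ⟨Finset.mem_range.mpr hM0, le_of_lt hθl⟩⟩
    set m : ℕ := Fs.max' hFne with hmdef
    have hmF : m ∈ Fs := Finset.max'_mem Fs hFne
    have hmM : m < M := Finset.mem_range.mp (Finset.mem_filter.mp hmF).1
    have hmφ : (pt m).2 ≤ θ'' := (Finset.mem_filter.mp hmF).2
    obtain ⟨hpP, hp1, hp2, hpl, hpu, hpe⟩ := hpt m hmM
    -- produce pair (pp, qq) with angular decomposition around θ''
    obtain ⟨qq, δ₂, hqP, hq1, hq2, hd2, hsum2, hqe⟩ :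
        ∃ (qq : ℂ) (δ₂ : ℝ), qq ∈ P ∧ (k:ℝ)+3/2 ≤ ‖qq‖ ∧
          ‖qq‖ ≤ (k:ℝ)+2 ∧ 0 ≤ δ₂ ∧
          (θ'' - (pt m).2) + δ₂ ≤ 2/t ∧
          qq = (‖qq‖ : ℂ) * Complex.exp ((((θ'':ℝ) + δ₂ : ℝ):ℂ) * Complex.I) := by
      by_cases hcase : m+1 < M
      · obtain ⟨hqP', hq1', hq2', hql, hqu, hqe'⟩ := hpt (m+1) hcase
        have hgt : θ'' < (pt (m+1)).2 := by
          by_contra hcon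
          push_neg at hcon
          have hmem : m+1 ∈ Fs := Finset.mem_filter.mpr ⟨Finset.mem_range.mpr hcase, hcon⟩
          have hle := Finset.le_max' Fs (m+1) hmem
          rw [← hmdef] at hle
          omega
        refine ⟨(pt (m+1)).1, (pt (m+1)).2 - θ'', hqP', hq1', hq2', by linarith, ?_, ?_⟩
        · have e1 : (pt (m+1)).2 ≤ 1/t*((m:ℝ)+1+1) := by
            have h' := hqu; push_cast at h'; linarith
          have e2 : 1/t*((m:ℝ)+1+1) - 1/t*(m:ℝ) = 2/t := by field_simp; ring
          linarith [hpl]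
        · rw [show θ''+((pt (m+1)).2-θ'') = (pt (m+1)).2 from by ring]
          exact hqe'
      · have hm1 : m+1 = M := by omega
        obtain ⟨hqP', hq1', hq2', hql, hqu, hqe'⟩ := hpt 0 hM0
        refine ⟨(pt 0).1, (pt 0).2 + 2*Real.pi - θ'', hqP', hq1', hq2', by linarith, ?_, ?_⟩
        · have h2π : 2*Real.pi ≤ (M:ℝ)*(1/t) := by
            rw [mul_one_div, le_div_iff₀ ht0]; exact hMc
          have hM1 : ((m:ℝ)) = (M:ℝ) - 1 := by
            have h' : ((m:ℝ))+1 = (M:ℝ) := by exact_mod_cast hm1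
            linarith
          have hqu0 : (pt 0).2 ≤ 1/t*((0:ℝ)+1) := by
            have h' := hqu; push_cast at h'; linarith
          have e2 : (1:ℝ)/t*((0:ℝ)+1) + (M:ℝ)*(1/t) - 1/t*((M:ℝ)-1) = 2/t := by
            field_simp; ring
          have hplm : 1/t*((M:ℝ)-1) < (pt m).2 := by rw [← hM1]; exact hpl
          linarith
        · have hper : Complex.exp ((((pt 0).2 + 2*Real.pi : ℝ):ℂ) * Complex.I)
              = Complex.exp ((((pt 0).2 : ℝ):ℂ) * Complex.I) := by
            push_cast
            rw [add_mul, Complex.exp_add, Complex.exp_two_pi_mul_I, mul_one]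
          rw [show θ''+((pt 0).2 + 2*Real.pi - θ'') = (pt 0).2 + 2*Real.pi from by ring, hper]
          exact hqe'
    set δ₁ : ℝ := θ'' - (pt m).2 with hd1def
    have hd1 : 0 ≤ δ₁ := by rw [hd1def]; linarith
    set pp : ℂ := (pt m).1 with hppdef
    have hpe' : pp = (‖pp‖ : ℂ) * Complex.exp ((((θ'':ℝ) - δ₁ : ℝ):ℂ) * Complex.I) := by
      rw [hppdef, hd1def]
      convert hpe using 4
      push_cast; ring
    obtain ⟨lam, mv, hl0, hl1, hmv, hEq1, hEq2⟩ :=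
      core k hk (‖pp‖) (‖qq‖) δ₁ δ₂ hp1 hp2 hq1 hq2 hd1 hd2 hsum2
    have hcombo := combo (‖pp‖) (‖qq‖) δ₁ δ₂ θ'' lam mv hEq1 hEq2
    rw [← hpe', ← hqe] at hcombo
    -- build the hull membership
    set E : ℂ := Complex.exp ((θ'':ℂ) * Complex.I) with hEdef
    have habsE : ‖E‖ = 1 := Complex.norm_exp_ofReal_mul_I θ''
    have hppE : pp + E ∈ S := by
      apply hballS pp hpP hp1 hp2
      simp [Metric.mem_closedBall, Complex.dist_eq, habsE]
    have hqqE : qq + E ∈ S := by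
      apply hballS qq hqP hq1 hq2
      simp [Metric.mem_closedBall, Complex.dist_eq, habsE]
    have hv : lam • (pp + E) + (1-lam) • (qq + E) = ((mv:ℂ) + 1) * E := by
      simp only [Complex.real_smul] at hcombo ⊢
      push_cast at hcombo ⊢
      linear_combination hcombo
    have hvmem : ((mv:ℂ)+1) * E ∈ convexHull ℝ S := by
      rw [← hv]
      exact (convex_convexHull ℝ S) (subset_convexHull ℝ S hppE)
        (subset_convexHull ℝ S hqqE) hl0 (by linarith) (by ring)
    have h0mem : (0:ℂ) ∈ convexHull ℝ S := by
      apply hGS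
      apply ih
      simp only [Metric.mem_closedBall, dist_self]
      positivity
    have hmv1 : (0:ℝ) < mv + 1 := by linarith
    have hzrep : z = (‖z‖ / (mv+1)) • (((mv:ℂ)+1) * E)
        + (1 - ‖z‖ / (mv+1)) • (0:ℂ) := by
      have hneC : ((mv:ℂ)+1) ≠ 0 := by
        have h' : ((mv:ℝ)+1 : ℝ) ≠ 0 := ne_of_gt hmv1
        exact_mod_cast h'
      simp only [Complex.real_smul, smul_zero, add_zero]
      push_cast
      rw [← mul_assoc, div_mul_cancel₀ _ hneC]
      exact hzeq
    rw [hzrep]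
    exact (convex_convexHull ℝ S) hvmem h0mem (by positivity)
      (by rw [sub_nonneg, div_le_one hmv1]; linarith) (by ring)
  have main : ∀ k : ℕ, 1 ≤ k → Metric.closedBall (0:ℂ) ((k:ℝ)+1) ⊆ G k := by
    intro k hk
    induction k, hk using Nat.le_induction with
    | base => rw [hG0]
    | succ k hk ih => exact hstep k hk ih
  refine ⟨main, ?_⟩
  apply Set.eq_univ_of_forall
  intro z
  simp only [Set.mem_iUnion, Set.mem_setOf_eq]
  refine ⟨1 + ⌈‖z‖⌉₊, Nat.le_add_right 1 _, main _ (Nat.le_add_right 1 _) ?_⟩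
  simp only [Metric.mem_closedBall, Complex.dist_eq, sub_zero]
  have h1 := Nat.le_ceil (‖z‖)
  push_cast
  linarith
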